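/- In the two-cutters-and-fugitive-ship game, if t_{f1}(λ₁) ≤ t_{f2}(λ₁) — i.e., when the evader runs directly away from pursuer 1 (heading φ = λ₁), pursuer 1's optimal capture time does not exceed pursuer 2's — then the value of the two-pursuer game equals the value of the 1v1 game against pursuer 1 alone, namely r₁₀/(β₁−1). -/
import Mathlib


open Real

lemma tf_at_lam (β r : ℝ) (hβ : 1 < β) (hr : 0 < r) (c : ℝ) (hc : c = r/(β^2-1)) :
    c * 1 + Real.sqrt (c^2 * 1^2 + c * r) = r / (β - 1) := by
  have hβ2 : (0:ℝ) < β^2 - 1 := by nlinarith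
  have hc0 : 0 < c := by rw [hc]; positivity
  have hkey : c^2 * 1^2 + c * r = (r * β / (β^2 - 1))^2 := by
    rw [hc]; field_simp; ring
  rw [hkey, Real.sqrt_sq (by positivity)]
  rw [hc]
  have hb1 : β - 1 ≠ 0 := by nlinarith
  have : β^2 - 1 = (β - 1) * (β + 1) := by ring
  field_simp
  nlinarith

/-- if t_{f1}(λ₁) ≤ t_{f2}(λ₁), the value of the two-cutters game —
the greatest over evader headings φ of the first capture time min(t_{f1}(φ), t_{f2}(φ)) —
equals the 1v1 value against pursuer 1 alone, namely r₁/(β₁−1). -/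
theorem stmt5 (β₁ β₂ r₁ r₂ lam₁ lam₂ : ℝ) (hβ₁ : 1 < β₁) (hβ₂ : 1 < β₂)
    (hr₁ : 0 < r₁) (hr₂ : 0 < r₂)
    (c₁ c₂ : ℝ) (hc₁ : c₁ = r₁/(β₁^2-1)) (hc₂ : c₂ = r₂/(β₂^2-1))
    (tf₁ tf₂ : ℝ → ℝ)
    (htf₁ : ∀ φ, tf₁ φ = c₁ * Real.cos (φ - lam₁)
        + Real.sqrt (c₁^2 * Real.cos (φ - lam₁)^2 + c₁ * r₁))
    (htf₂ : ∀ φ, tf₂ φ = c₂ * Real.cos (φ - lam₂)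
        + Real.sqrt (c₂^2 * Real.cos (φ - lam₂)^2 + c₂ * r₂))
    (hcase : tf₁ lam₁ ≤ tf₂ lam₁) :
    IsGreatest (Set.range fun φ => min (tf₁ φ) (tf₂ φ)) (r₁ / (β₁ - 1)) := by
  have hβ2 : (0:ℝ) < β₁^2 - 1 := by nlinarith
  have hc0 : 0 < c₁ := by rw [hc₁]; positivity
  have hval : tf₁ lam₁ = r₁ / (β₁ - 1) := by
    rw [htf₁]
    have : Real.cos (lam₁ - lam₁) = 1 := by simp
    rw [this]
    exact tf_at_lam β₁ r₁ hβ₁ hr₁ c₁ hc₁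
  constructor
  · exact ⟨lam₁, by simp only []; rw [min_eq_left hcase, hval]⟩
  · rintro x ⟨φ, rfl⟩
    have hle : tf₁ φ ≤ tf₁ lam₁ := by
      rw [htf₁ φ, htf₁ lam₁]
      have hc1 : Real.cos (φ - lam₁) ≤ 1 := Real.cos_le_one _
      have hc2 : Real.cos (φ - lam₁)^2 ≤ 1 := by
        have := Real.neg_one_le_cos (φ - lam₁); nlinarith
    -- cos(lam₁-lam₁)=1
      have h1 : Real.cos (lam₁ - lam₁) = 1 := by simp
      rw [h1]
      apply add_le_add
      · exact mul_le_mul_of_nonneg_left hc1 hc0.le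
      · apply Real.sqrt_le_sqrt; nlinarith
    calc min (tf₁ φ) (tf₂ φ) ≤ tf₁ φ := min_le_left _ _
      _ ≤ tf₁ lam₁ := hle
      _ = r₁ / (β₁ - 1) := hval
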